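/- Let R be a commutative ring and 𝔞 an ideal of R. The R-module R/𝔞 is monoform (i.e., for every nonzero submodule L of R/𝔞, no nonzero submodule of R/𝔞 is isomorphic to a submodule of (R/𝔞)/L) if and only if 𝔞 is a prime ideal. -/

import Mathlib

/-- A module `H` over a ring `R` is *monoform* if it is nonzero and for each nonzero
submodule `L` of `H`, no nonzero submodule of `H` is isomorphic to a submodule of `H ⧸ L`. -/
def IsMonoform (R : Type*) [Ring R] (H : Type*) [AddCommGroup H] [Module R H] : Prop :=
  Nontrivial H ∧
    ∀ L : Submodule R H, L ≠ ⊥ →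
      ¬∃ (N : Submodule R H) (N' : Submodule R (H ⧸ L)), N ≠ ⊥ ∧ Nonempty (N ≃ₗ[R] N')

/-- For a commutative ring `R` and an ideal `𝔞`, the `R`-module `R ⧸ 𝔞` is monoform
if and only if `𝔞` is a prime ideal. -/
theorem quotient_isMonoform_iff_isPrime (R : Type*) [CommRing R] (𝔞 : Ideal R) :
    IsMonoform R (R ⧸ 𝔞) ↔ 𝔞.IsPrime := by
  constructor
  · rintro ⟨hnt, hmono⟩
    have hne : 𝔞 ≠ ⊤ := by
      intro h
      rw [← Submodule.Quotient.subsingleton_iff] at h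
      exact not_subsingleton _ h
    refine ⟨hne, ?_⟩
    intro x y hxy
    by_contra hcon
    push_neg at hcon
    obtain ⟨hx, hy⟩ := hcon
    set c : Ideal R := 𝔞.colon (Submodule.span R {x}) with hc
    have hyc : y ∈ c := by
      rw [hc, Submodule.mem_colon_span_singleton, smul_eq_mul, mul_comm]
      exact hxy
    have hle : 𝔞 ≤ c := by
      intro r hr
      rw [hc, Submodule.mem_colon_span_singleton, smul_eq_mul]
      exact 𝔞.mul_mem_right x hr
    set L : Submodule R (R ⧸ 𝔞) := Submodule.map 𝔞.mkQ c with hL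
    have hLne : L ≠ ⊥ := by
      rw [Submodule.ne_bot_iff]
      refine ⟨𝔞.mkQ y, Submodule.mem_map_of_mem hyc, ?_⟩
      simp only [Submodule.mkQ_apply]
      exact fun h => hy ((Submodule.Quotient.mk_eq_zero 𝔞).mp h)
    set f : R →ₗ[R] R ⧸ 𝔞 := x • 𝔞.mkQ with hf
    have hker : LinearMap.ker f = c := by
      ext r
      simp only [LinearMap.mem_ker, hf, LinearMap.smul_apply, Submodule.mkQ_apply,
        ← Submodule.Quotient.mk_smul, Submodule.Quotient.mk_eq_zero, hc,
        Submodule.mem_colon_span_singleton, smul_eq_mul]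
      constructor
      · intro h; rwa [mul_comm] at h
      · intro h; rwa [mul_comm]
    have hNne : LinearMap.range f ≠ ⊥ := by
      rw [Submodule.ne_bot_iff]
      refine ⟨f 1, LinearMap.mem_range_self f 1, ?_⟩
      simp only [hf, LinearMap.smul_apply, Submodule.mkQ_apply]
      rw [← Submodule.Quotient.mk_smul, smul_eq_mul, mul_one]
      exact fun h => hx ((Submodule.Quotient.mk_eq_zero 𝔞).mp h)
    have e2 : ((R ⧸ 𝔞) ⧸ L) ≃ₗ[R] R ⧸ c :=
      Submodule.quotientQuotientEquivQuotient 𝔞 c hle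
    have e : (LinearMap.range f) ≃ₗ[R] (⊤ : Submodule R ((R ⧸ 𝔞) ⧸ L)) :=
      f.quotKerEquivRange.symm ≪≫ₗ Submodule.quotEquivOfEq _ c hker ≪≫ₗ
        e2.symm ≪≫ₗ Submodule.topEquiv.symm
    exact hmono L hLne ⟨LinearMap.range f, ⊤, hNne, ⟨e⟩⟩
  · intro hp
    have hnt : Nontrivial (R ⧸ 𝔞) := by
      rw [Submodule.Quotient.nontrivial_iff]; exact hp.ne_top
    refine ⟨hnt, ?_⟩
    rintro L hLne ⟨N, N', hNne, ⟨e⟩⟩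
    obtain ⟨z, hzL, hz0⟩ := Submodule.ne_bot_iff L |>.mp hLne
    obtain ⟨c, rfl⟩ := Submodule.Quotient.mk_surjective 𝔞 z
    have hc : c ∉ 𝔞 := by
      intro h
      exact hz0 ((Submodule.Quotient.mk_eq_zero 𝔞).mpr h)
    obtain ⟨n, hnN, hn0⟩ := Submodule.ne_bot_iff N |>.mp hNne
    obtain ⟨r, rfl⟩ := Submodule.Quotient.mk_surjective 𝔞 n
    have hr : r ∉ 𝔞 := by
      intro h
      exact hn0 ((Submodule.Quotient.mk_eq_zero 𝔞).mpr h)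
    -- c • kills everything in (R ⧸ 𝔞) ⧸ L
    have hkill : ∀ w : (R ⧸ 𝔞) ⧸ L, c • w = 0 := by
      intro w
      obtain ⟨u, rfl⟩ := Submodule.Quotient.mk_surjective L w
      obtain ⟨s, rfl⟩ := Submodule.Quotient.mk_surjective 𝔞 u
      rw [← Submodule.Quotient.mk_smul, Submodule.Quotient.mk_eq_zero]
      have : c • (Submodule.Quotient.mk s : R ⧸ 𝔞) = s • (Submodule.Quotient.mk c : R ⧸ 𝔞) := by
        rw [← Submodule.Quotient.mk_smul, ← Submodule.Quotient.mk_smul,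
          smul_eq_mul, smul_eq_mul, mul_comm]
      rw [this]
      exact L.smul_mem s hzL
    set nN : N := ⟨Submodule.Quotient.mk r, hnN⟩ with hnN'
    have h1 : e (c • nN) = 0 := by
      rw [map_smul]
      ext
      simp [hkill]
    have h2 : c • nN = 0 := by
      refine e.injective ?_
      rw [h1]
      exact (_root_.map_zero (e : N →ₗ[R] N')).symm
    have h3 : c • (Submodule.Quotient.mk r : R ⧸ 𝔞) = 0 := by
      have := congrArg (Subtype.val) h2
      simpa [hnN'] using this
    rw [← Submodule.Quotient.mk_smul, Submodule.Quotient.mk_eq_zero, smul_eq_mul] at h3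
    rcases hp.mem_or_mem h3 with h | h
    · exact hc h
    · exact hr h
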